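/- Let M be a proper metric space such that for every pair of points x, y ∈ M there exists an isometry of M onto itself exchanging x and y (this holds in particular for every Riemannian symmetric space). Let ν be a positive Borel measure on M×M that is diagonally invariant. If ν(A × M) < ∞ for some nonempty open set A ⊆ M, then ν(B × M) = ν(M × B) for every Borel set B ⊆ M. -/

import Mathlib

open MeasureTheory

open Metric Set Filter Topology ENNReal

section MTPAux

variable {M : Type*} [MetricSpace M] [MeasurableSpace M] [BorelSpace M]

private lemma mtp_meas_aux [SecondCountableTopology M]
    {f : M → ℝ≥0∞} (hf : Measurable f) (r : ℝ) :
    Measurable (Function.uncurry fun x y : M => (Metric.ball x r).indicator f y) := by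
  have h : (Function.uncurry fun x y : M => (Metric.ball x r).indicator f y)
      = {q : M × M | dist q.2 q.1 < r}.indicator (fun q => f q.2) := by
    funext q
    by_cases hq : dist q.2 q.1 < r
    · simp [Function.uncurry, Set.indicator_apply, Metric.mem_ball, hq]
    · simp [Function.uncurry, Set.indicator_apply, Metric.mem_ball, hq]
  rw [h]
  exact (hf.comp measurable_snd).indicator
    ((isOpen_lt (continuous_snd.dist continuous_fst) continuous_const).measurableSet)

private lemma mtp_smooth [SecondCountableTopology M]
    (μ ρ : Measure M) [SFinite μ] [SFinite ρ]
    {f : M → ℝ≥0∞} (hf : Measurable f) {r : ℝ} {c : ℝ≥0∞}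
    (hρ : ∀ y, ρ (Metric.ball y r) = c) :
    ∫⁻ x, ∫⁻ y, (Metric.ball x r).indicator f y ∂μ ∂ρ = c * ∫⁻ y, f y ∂μ := by
  rw [lintegral_lintegral_swap (mtp_meas_aux hf r).aemeasurable]
  have h : ∀ y, ∫⁻ x, (Metric.ball x r).indicator f y ∂ρ = f y * c := by
    intro y
    have h1 : (fun x => (Metric.ball x r).indicator f y)
        = fun x => f y * (Metric.ball y r).indicator (1 : M → ℝ≥0∞) x := by
      classical
      funext x
      rw [Set.indicator_apply, Set.indicator_apply, Pi.one_apply, mul_ite, mul_one, mul_zero]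
      exact if_congr (by simp [Metric.mem_ball, dist_comm]) rfl rfl
    rw [h1, lintegral_const_mul _ (measurable_one.indicator measurableSet_ball),
      lintegral_indicator_one measurableSet_ball, hρ y]
  simp_rw [h]
  rw [lintegral_mul_const _ hf, mul_comm]

private lemma mtp_tonelli_right [SecondCountableTopology M]
    (ν : Measure (M × M)) [SFinite ν] (μ : Measure M) [SFinite μ]
    {E : Set M} (hE : MeasurableSet E) {s : ℝ} {c : ℝ≥0∞}
    (hμ : ∀ y, μ (Metric.ball y s) = c) :
    ∫⁻ w, ν (E ×ˢ Metric.ball w s) ∂μ = c * ν (E ×ˢ Set.univ) := by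
  classical
  set S : Set (M × (M × M)) := {q | q.2.1 ∈ E ∧ dist q.2.2 q.1 < s} with hSdef
  have hS : MeasurableSet S := by
    refine MeasurableSet.inter ?_ ?_
    · exact (measurable_fst.comp measurable_snd) hE
    · exact (isOpen_lt ((continuous_snd.comp continuous_snd).dist continuous_fst)
        continuous_const).measurableSet
  have step1 : ∀ w, ν (E ×ˢ Metric.ball w s)
      = ∫⁻ p, S.indicator (1 : (M × (M × M)) → ℝ≥0∞) (w, p) ∂ν := by
    intro w
    have h : (fun p => S.indicator (1 : (M × (M × M)) → ℝ≥0∞) (w, p))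
        = (E ×ˢ Metric.ball w s).indicator (1 : (M × M) → ℝ≥0∞) := by
      funext p
      rw [Set.indicator_apply, Set.indicator_apply]
      exact if_congr (by simp [hSdef, Set.mem_prod, Metric.mem_ball]) rfl rfl
    rw [h, lintegral_indicator_one (hE.prod measurableSet_ball)]
  simp_rw [step1]
  have hsw := lintegral_lintegral_swap (μ := μ) (ν := ν)
    (f := fun w p => S.indicator (1 : (M × (M × M)) → ℝ≥0∞) (w, p))
    (measurable_one.indicator hS).aemeasurable
  rw [hsw]
  have step2 : ∀ p : M × M, ∫⁻ w, S.indicator (1 : (M × (M × M)) → ℝ≥0∞) (w, p) ∂μ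
      = (E ×ˢ (Set.univ : Set M)).indicator (1 : (M × M) → ℝ≥0∞) p * c := by
    intro p
    have h : (fun w => S.indicator (1 : (M × (M × M)) → ℝ≥0∞) (w, p))
        = fun w => (E ×ˢ (Set.univ : Set M)).indicator (1 : (M × M) → ℝ≥0∞) p
            * (Metric.ball p.2 s).indicator (1 : M → ℝ≥0∞) w := by
      funext w
      by_cases h1 : p.1 ∈ E <;> by_cases h2 : dist p.2 w < s <;>
        simp [hSdef, Set.indicator_apply, Set.mem_prod, Metric.mem_ball, h1, h2, dist_comm p.2 w]
    rw [h, lintegral_const_mul _ (measurable_one.indicator measurableSet_ball),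
      lintegral_indicator_one measurableSet_ball, hμ p.2]
  simp_rw [step2]
  rw [lintegral_mul_const _ (measurable_one.indicator (hE.prod MeasurableSet.univ)),
    lintegral_indicator_one (hE.prod MeasurableSet.univ), mul_comm]

private lemma mtp_tonelli_left [SecondCountableTopology M]
    (ν : Measure (M × M)) [SFinite ν] (μ : Measure M) [SFinite μ]
    {E : Set M} (hE : MeasurableSet E) {r : ℝ} {c : ℝ≥0∞}
    (hμ : ∀ y, μ (Metric.ball y r) = c) :
    ∫⁻ w, ν (Metric.ball w r ×ˢ E) ∂μ = c * ν ((Set.univ : Set M) ×ˢ E) := by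
  classical
  set S : Set (M × (M × M)) := {q | dist q.2.1 q.1 < r ∧ q.2.2 ∈ E} with hSdef
  have hS : MeasurableSet S := by
    refine MeasurableSet.inter ?_ ?_
    · exact (isOpen_lt ((continuous_fst.comp continuous_snd).dist continuous_fst)
        continuous_const).measurableSet
    · exact (measurable_snd.comp measurable_snd) hE
  have step1 : ∀ w, ν (Metric.ball w r ×ˢ E)
      = ∫⁻ p, S.indicator (1 : (M × (M × M)) → ℝ≥0∞) (w, p) ∂ν := by
    intro w
    have h : (fun p => S.indicator (1 : (M × (M × M)) → ℝ≥0∞) (w, p))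
        = (Metric.ball w r ×ˢ E).indicator (1 : (M × M) → ℝ≥0∞) := by
      funext p
      rw [Set.indicator_apply, Set.indicator_apply]
      exact if_congr (by simp [hSdef, Set.mem_prod, Metric.mem_ball]) rfl rfl
    rw [h, lintegral_indicator_one (measurableSet_ball.prod hE)]
  simp_rw [step1]
  have hsw := lintegral_lintegral_swap (μ := μ) (ν := ν)
    (f := fun w p => S.indicator (1 : (M × (M × M)) → ℝ≥0∞) (w, p))
    (measurable_one.indicator hS).aemeasurable
  rw [hsw]
  have step2 : ∀ p : M × M, ∫⁻ w, S.indicator (1 : (M × (M × M)) → ℝ≥0∞) (w, p) ∂μ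
      = ((Set.univ : Set M) ×ˢ E).indicator (1 : (M × M) → ℝ≥0∞) p * c := by
    intro p
    have h : (fun w => S.indicator (1 : (M × (M × M)) → ℝ≥0∞) (w, p))
        = fun w => ((Set.univ : Set M) ×ˢ E).indicator (1 : (M × M) → ℝ≥0∞) p
            * (Metric.ball p.1 r).indicator (1 : M → ℝ≥0∞) w := by
      funext w
      by_cases h1 : p.2 ∈ E <;> by_cases h2 : dist p.1 w < r <;>
        simp [hSdef, Set.indicator_apply, Set.mem_prod, Metric.mem_ball, h1, h2, dist_comm p.1 w]
    rw [h, lintegral_const_mul _ (measurable_one.indicator measurableSet_ball),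
      lintegral_indicator_one measurableSet_ball, hμ p.1]
  simp_rw [step2]
  rw [lintegral_mul_const _ (measurable_one.indicator (MeasurableSet.univ.prod hE)),
    lintegral_indicator_one (MeasurableSet.univ.prod hE), mul_comm]

end MTPAux

/-- A Borel measure `ν` on `M × M` is diagonally invariant if
`ν (gA × gB) = ν (A × B)` for every isometry `g` of `M` onto itself and all Borel sets
`A, B ⊆ M`. -/
def DiagonallyInvariant {M : Type*} [MetricSpace M] [MeasurableSpace M]
    (ν : Measure (M × M)) : Prop :=
  ∀ (g : M ≃ᵢ M) (A B : Set M), MeasurableSet A → MeasurableSet B →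
    ν ((g '' A) ×ˢ (g '' B)) = ν (A ×ˢ B)

/-- **Mass Transport Principle.** Let `M` be a proper metric space such that any
two points can be exchanged by an isometry of `M` onto itself, and let `ν` be a positive
diagonally invariant Borel measure on `M × M`. If `ν (A × M) < ∞` for some nonempty open
`A ⊆ M`, then `ν (B × M) = ν (M × B)` for every Borel set `B ⊆ M`. -/
theorem mass_transport_principle
    {M : Type*} [MetricSpace M] [MeasurableSpace M] [BorelSpace M] [ProperSpace M]
    (hsym : ∀ x y : M, ∃ g : M ≃ᵢ M, g x = y ∧ g y = x)
    (ν : Measure (M × M)) (hν : DiagonallyInvariant ν)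
    (hfin : ∃ A : Set M, IsOpen A ∧ A.Nonempty ∧ ν (A ×ˢ (Set.univ : Set M)) < ⊤) :
    ∀ B : Set M, MeasurableSet B →
      ν (B ×ˢ (Set.univ : Set M)) = ν ((Set.univ : Set M) ×ˢ B) := by
    classical
  obtain ⟨A, hAopen, ⟨a, haA⟩, hAfin⟩ := hfin
  haveI : Nonempty M := ⟨a⟩
  intro B hB
  set μ : Measure M := ν.fst with hμdef
  set μ₂ : Measure M := ν.snd with hμ₂def
  have hfst : ∀ {E : Set M}, MeasurableSet E → μ E = ν (E ×ˢ Set.univ) := by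
    intro E hE
    rw [hμdef, Measure.fst_apply hE, ← Set.prod_univ]
  have hsnd : ∀ {E : Set M}, MeasurableSet E → μ₂ E = ν (Set.univ ×ˢ E) := by
    intro E hE
    rw [hμ₂def, Measure.snd_apply hE, ← Set.univ_prod]
  have hrange : ∀ g : M ≃ᵢ M, g '' Set.univ = Set.univ := fun g => by
    rw [Set.image_univ, g.surjective.range_eq]
  have hinv1 : ∀ (g : M ≃ᵢ M) {E : Set M}, MeasurableSet E →
      ν ((g '' E) ×ˢ Set.univ) = ν (E ×ˢ Set.univ) := by
    intro g E hE
    have h := hν g E Set.univ hE MeasurableSet.univ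
    rwa [hrange g] at h
  have hinv2 : ∀ (g : M ≃ᵢ M) {E : Set M}, MeasurableSet E →
      ν (Set.univ ×ˢ (g '' E)) = ν (Set.univ ×ˢ E) := by
    intro g E hE
    have h := hν g Set.univ E MeasurableSet.univ hE
    rwa [hrange g] at h
  set m : ℝ → ℝ≥0∞ := fun r => ν (Metric.ball a r ×ˢ Set.univ) with hmdef
  have hm1 : ∀ (x : M) (r : ℝ), ν (Metric.ball x r ×ˢ Set.univ) = m r := by
    intro x r
    obtain ⟨g, hgx, hga⟩ := hsym x a
    have h := hinv1 g (measurableSet_ball : MeasurableSet (Metric.ball x r))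
    rw [g.image_ball, hgx] at h
    exact h.symm
  have hm2const : ∀ (x y : M) (r : ℝ),
      ν (Set.univ ×ˢ Metric.ball x r) = ν (Set.univ ×ˢ Metric.ball y r) := by
    intro x y r
    obtain ⟨g, hgx, hgy⟩ := hsym x y
    have h := hinv2 g (measurableSet_ball : MeasurableSet (Metric.ball x r))
    rw [g.image_ball, hgx] at h
    exact h.symm
  have hswap : ∀ (x y : M) (r s : ℝ),
      ν (Metric.ball x r ×ˢ Metric.ball y s) = ν (Metric.ball y r ×ˢ Metric.ball x s) := by
    intro x y r s
    obtain ⟨g, hgx, hgy⟩ := hsym x y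
    have h := hν g (Metric.ball x r) (Metric.ball y s) measurableSet_ball measurableSet_ball
    rw [g.image_ball, g.image_ball, hgx, hgy] at h
    exact h.symm
  haveI : IsLocallyFiniteMeasure μ := by
    constructor
    intro x
    obtain ⟨g, hga, hgx⟩ := hsym a x
    have hgopen : IsOpen ((g : M → M) '' A) := by
      simpa using g.toHomeomorph.isOpen_image.mpr hAopen
    refine ⟨g '' A, hgopen.mem_nhds ⟨a, haA, hga⟩, ?_⟩
    rw [hfst hgopen.measurableSet, hinv1 g hAopen.measurableSet]
    exact hAfin
  have hmfin : ∀ r : ℝ, m r ≠ ∞ := by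
    intro r
    have h1 : m r = μ (Metric.ball a r) := ((hfst measurableSet_ball).trans (hm1 a r)).symm
    rw [h1]
    exact ((measure_mono Metric.ball_subset_closedBall).trans_lt
      (isCompact_closedBall a r).measure_lt_top).ne
  haveI : SigmaFinite ν := by
    obtain ⟨D, hDc, hDd⟩ := TopologicalSpace.exists_countable_dense M
    obtain ⟨ε, hε, hball⟩ := Metric.isOpen_iff.1 hAopen a haA
    refine Measure.sigmaFinite_of_countable
      (hDc.image (fun d => Metric.ball d ε ×ˢ (Set.univ : Set M))) ?_ ?_
    · rintro _ ⟨d, hd, rfl⟩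
      rw [hm1 d ε]
      calc m ε ≤ ν (A ×ˢ Set.univ) :=
            measure_mono (Set.prod_mono hball subset_rfl)
        _ < ∞ := hAfin
    · rw [Set.sUnion_eq_univ_iff]
      rintro ⟨x, y⟩
      obtain ⟨d, hdD, hdx⟩ := hDd.exists_dist_lt x hε
      exact ⟨Metric.ball d ε ×ˢ Set.univ, ⟨d, hdD, rfl⟩,
        ⟨Metric.mem_ball.2 hdx, Set.mem_univ y⟩⟩
  by_cases hzero : μ Set.univ = 0
  · have huniv : ν Set.univ = 0 := by
      rw [← Set.univ_prod_univ, ← hfst MeasurableSet.univ]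
      exact hzero
    rw [le_antisymm ((measure_mono (Set.subset_univ _)).trans huniv.le) zero_le,
      le_antisymm ((measure_mono (Set.subset_univ _)).trans huniv.le) zero_le]
  have hmpos : ∀ r : ℝ, 0 < r → m r ≠ 0 := by
    intro r hr h0
    apply hzero
    obtain ⟨D, hDc, hDd⟩ := TopologicalSpace.exists_countable_dense M
    have hcover : (Set.univ : Set M) ⊆ ⋃ d ∈ D, Metric.ball d r := by
      intro x _
      obtain ⟨d, hdD, hdx⟩ := hDd.exists_dist_lt x hr
      exact Set.mem_biUnion hdD (Metric.mem_ball.2 hdx)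
    refine measure_mono_null hcover ((measure_biUnion_null_iff hDc).2 fun d _ => ?_)
    rw [hfst measurableSet_ball, hm1 d r, h0]
  have hμball : ∀ (y : M) (r : ℝ), μ (Metric.ball y r) = m r :=
    fun y r => (hfst measurableSet_ball).trans (hm1 y r)
  have hm2 : ∀ (x : M) (s : ℝ), ν (Set.univ ×ˢ Metric.ball x s) = m s := by
    intro x s
    have h1 : ∫⁻ w, ν (Metric.ball x 1 ×ˢ Metric.ball w s) ∂μ = m s * m 1 := by
      rw [mtp_tonelli_right ν μ measurableSet_ball (fun y => hμball y s), hm1 x 1]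
    have h2 : ∫⁻ w, ν (Metric.ball w 1 ×ˢ Metric.ball x s) ∂μ
        = m 1 * ν (Set.univ ×ˢ Metric.ball x s) :=
      mtp_tonelli_left ν μ measurableSet_ball (fun y => hμball y 1)
    have h3 : ∫⁻ w, ν (Metric.ball x 1 ×ˢ Metric.ball w s) ∂μ
        = ∫⁻ w, ν (Metric.ball w 1 ×ˢ Metric.ball x s) ∂μ :=
      lintegral_congr fun w => hswap x w 1 s
    have h4 : m 1 * m s = m 1 * ν (Set.univ ×ˢ Metric.ball x s) := by
      rw [← h2, ← h3, h1, mul_comm]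
    exact ((ENNReal.mul_right_inj (hmpos 1 one_pos) (hmfin 1)).1 h4).symm
  have hμ₂ball : ∀ (y : M) (r : ℝ), μ₂ (Metric.ball y r) = m r :=
    fun y r => (hsnd measurableSet_ball).trans (hm2 y r)
  haveI : IsLocallyFiniteMeasure μ₂ :=
    ⟨fun x => ⟨Metric.ball x 1, Metric.ball_mem_nhds x one_pos,
      by rw [hμ₂ball x 1]; exact (hmfin 1).lt_top⟩⟩
  suffices hμeq : μ = μ₂ by
    rw [← hfst hB, ← hsnd hB, hμeq]
  have hcompact : ∀ K : Set M, IsCompact K → μ K = μ₂ K := by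
    intro K hK
    rcases K.eq_empty_or_nonempty with rfl | hKne
    · simp
    set gr : ℕ → M → ℝ := fun n y => 1 - (n + 1 : ℝ) * Metric.infDist y K with hgrdef
    set f : ℕ → M → ℝ≥0∞ := fun n y => ENNReal.ofReal (gr n y) with hfdef
    have hgrcont : ∀ n, Continuous (gr n) := fun n =>
      continuous_const.sub (continuous_const.mul (Metric.continuous_infDist_pt K))
    have hfmeas : ∀ n, Measurable (f n) := fun n =>
      (ENNReal.continuous_ofReal.comp (hgrcont n)).measurable
    have hfle1 : ∀ n y, f n y ≤ 1 := by
      intro n y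
      simp only [hfdef, hgrdef]
      rw [← ENNReal.ofReal_one]
      refine ENNReal.ofReal_le_ofReal ?_
      have h0 : 0 ≤ (n + 1 : ℝ) * Metric.infDist y K :=
        mul_nonneg (by positivity) Metric.infDist_nonneg
      linarith
    have hsupp0 : ∀ (n : ℕ) (y : M), 1 ≤ Metric.infDist y K → f n y = 0 := by
      intro n y hy
      simp only [hfdef, hgrdef]
      rw [ENNReal.ofReal_eq_zero]
      have h1 : (1 : ℝ) ≤ (n + 1 : ℝ) := by
        have h2 : (0:ℝ) ≤ (n:ℝ) := Nat.cast_nonneg n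
        linarith
      nlinarith [Metric.infDist_nonneg (x := y) (s := K)]
    have hanti : Antitone f := by
      intro n k hnk
      intro y
      simp only [hfdef, hgrdef]
      refine ENNReal.ofReal_le_ofReal ?_
      have hc : (n + 1 : ℝ) ≤ (k + 1 : ℝ) := by exact_mod_cast Nat.succ_le_succ hnk
      nlinarith [Metric.infDist_nonneg (x := y) (s := K)]
    have hiInf : ∀ y, (⨅ n, f n y) = K.indicator (1 : M → ℝ≥0∞) y := by
      intro y
      by_cases hy : y ∈ K
      · have h1 : ∀ n, f n y = 1 := by
          intro n
          simp [hfdef, hgrdef, Metric.infDist_zero_of_mem hy]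
        simp [h1, Set.indicator_of_mem hy]
      · rw [Set.indicator_of_notMem hy]
        have hd : 0 < Metric.infDist y K := (hK.isClosed.notMem_iff_infDist_pos hKne).1 hy
        obtain ⟨n, hn⟩ := exists_nat_gt (1 / Metric.infDist y K)
        have hzero : f n y = 0 := by
          simp only [hfdef, hgrdef]
          rw [ENNReal.ofReal_eq_zero]
          rw [div_lt_iff₀ hd] at hn
          nlinarith
        exact le_antisymm (iInf_le_of_le n hzero.le) zero_le
    set T : Set M := Metric.thickening 2 K with hTdef
    have hTsub : T ⊆ Metric.cthickening 2 K := Metric.thickening_subset_cthickening 2 K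
    have hTmeas : MeasurableSet T := Metric.isOpen_thickening.measurableSet
    have hnotT : ∀ y, y ∉ T → 2 ≤ Metric.infDist y K := by
      intro y hy
      by_contra h
      push_neg at h
      exact hy ((Metric.mem_thickening_iff_infDist_lt hKne).2 h)
    have hbound_fin : ∀ (ρ : Measure M) [IsFiniteMeasureOnCompacts ρ],
        ∫⁻ y, T.indicator (1 : M → ℝ≥0∞) y ∂ρ ≠ ∞ := by
      intro ρ _
      rw [lintegral_indicator_one hTmeas]
      exact ((measure_mono hTsub).trans_lt hK.cthickening.measure_lt_top).ne
    have hfboundT : ∀ n y, f n y ≤ T.indicator (1 : M → ℝ≥0∞) y := by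
      intro n y
      by_cases hy : y ∈ T
      · rw [Set.indicator_of_mem hy]; exact hfle1 n y
      · rw [Set.indicator_of_notMem hy]
        exact (hsupp0 n y (by linarith [hnotT y hy])).le
    have hρK : ∀ (ρ : Measure M) [IsFiniteMeasureOnCompacts ρ],
        ρ K = ⨅ n, ∫⁻ y, f n y ∂ρ := by
      intro ρ _
      rw [← lintegral_iInf hfmeas hanti
        ((lintegral_mono (hfboundT 0)).trans_lt (hbound_fin ρ).lt_top).ne]
      rw [lintegral_congr hiInf, lintegral_indicator_one hK.measurableSet]
    rw [hρK μ, hρK μ₂]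
    refine iInf_congr fun n => ?_
    set r : ℕ → ℝ := fun k => 1 / ((k : ℝ) + 1) with hrdef
    have hrpos : ∀ k : ℕ, 0 < r k := fun k => by simp only [hrdef]; positivity
    have hrle1 : ∀ k : ℕ, r k ≤ 1 := by
      intro k
      simp only [hrdef]
      rw [div_le_one (by positivity)]
      simp
    set F : ℕ → M → ℝ≥0∞ := fun k x =>
      (m (r k))⁻¹ * ∫⁻ y, (Metric.ball x (r k)).indicator (f n) y ∂μ with hFdef
    have hGmeas : ∀ k, Measurable fun x => ∫⁻ y, (Metric.ball x (r k)).indicator (f n) y ∂μ :=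
      fun k => (mtp_meas_aux (hfmeas n) (r k)).lintegral_prod_right'
    have hFmeas : ∀ k, Measurable (F k) := by
      intro k
      simp only [hFdef]
      exact (hGmeas k).const_mul _
    have hFconst : ∀ k, ∫⁻ x, F k x ∂μ₂ = ∫⁻ y, f n y ∂μ := by
      intro k
      simp only [hFdef]
      rw [lintegral_const_mul _ (hGmeas k),
        mtp_smooth μ μ₂ (hfmeas n) (fun y => hμ₂ball y (r k)), ← mul_assoc,
        ENNReal.inv_mul_cancel (hmpos _ (hrpos k)) (hmfin _), one_mul]
    have hFle1 : ∀ k x, F k x ≤ 1 := by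
      intro k x
      simp only [hFdef]
      have h1 : ∫⁻ y, (Metric.ball x (r k)).indicator (f n) y ∂μ ≤ m (r k) := by
        have hmono : ∀ y, (Metric.ball x (r k)).indicator (f n) y
            ≤ (Metric.ball x (r k)).indicator (1 : M → ℝ≥0∞) y := by
          intro y
          by_cases hy : y ∈ Metric.ball x (r k)
          · rw [Set.indicator_of_mem hy, Set.indicator_of_mem hy]; exact hfle1 n y
          · rw [Set.indicator_of_notMem hy, Set.indicator_of_notMem hy]
        refine le_trans (lintegral_mono hmono) ?_
        rw [lintegral_indicator_one measurableSet_ball, hμball]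
      refine le_trans (mul_le_mul_right h1 _) ?_
      rw [ENNReal.inv_mul_cancel (hmpos _ (hrpos k)) (hmfin _)]
    have hFsuppT : ∀ k x, x ∉ T → F k x = 0 := by
      intro k x hx
      simp only [hFdef]
      have hz : ∀ y, (Metric.ball x (r k)).indicator (f n) y = 0 := by
        intro y
        by_cases hy : y ∈ Metric.ball x (r k)
        · rw [Set.indicator_of_mem hy]
          refine hsupp0 n y ?_
          have h1 : dist y x < 1 := lt_of_lt_of_le (Metric.mem_ball.1 hy) (hrle1 k)
          have h2 := Metric.infDist_le_infDist_add_dist (x := x) (y := y) (s := K)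
          have h3 := hnotT x hx
          rw [dist_comm] at h2
          linarith
        · rw [Set.indicator_of_notMem hy]
      have hzz : ∫⁻ y, (Metric.ball x (r k)).indicator (f n) y ∂μ = 0 := by
        simp [hz]
      rw [hzz, mul_zero]
    have hFboundT : ∀ k x, F k x ≤ T.indicator (1 : M → ℝ≥0∞) x := by
      intro k x
      by_cases hx : x ∈ T
      · rw [Set.indicator_of_mem hx]; exact hFle1 k x
      · rw [Set.indicator_of_notMem hx]; exact (hFsuppT k x hx).le
    have hlim : ∀ x, Tendsto (fun k => F k x) atTop (𝓝 (f n x)) := by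
      intro x
      have hfintop : f n x ≠ ∞ := ((hfle1 n x).trans_lt ENNReal.one_lt_top).ne
      rw [ENNReal.tendsto_nhds hfintop]
      intro ε hε
      set εr : ℝ≥0∞ := min ε 1 with hεrdef
      have hεrpos : 0 < εr := lt_min hε zero_lt_one
      have hεrtop : εr ≠ ∞ := ((min_le_right ε 1).trans_lt ENNReal.one_lt_top).ne
      set η : ℝ := εr.toReal with hηdef
      have hηpos : 0 < η := ENNReal.toReal_pos hεrpos.ne' hεrtop
      have hηof : ENNReal.ofReal η = εr := ENNReal.ofReal_toReal hεrtop
      obtain ⟨δ, hδpos, hδ⟩ := Metric.continuousAt_iff.1 (hgrcont n).continuousAt η hηpos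
      have hev : ∀ᶠ k : ℕ in atTop, r k < δ := by
        have h0 : Tendsto r atTop (𝓝 0) := by
          simp only [hrdef]
          exact tendsto_one_div_add_atTop_nhds_zero_nat
        exact h0.eventually_lt_const hδpos
      filter_upwards [hev] with k hrk
      have hup : ∀ y ∈ Metric.ball x (r k), f n y ≤ f n x + εr := by
        intro y hy
        have h1 : dist (gr n y) (gr n x) < η := hδ (lt_trans (Metric.mem_ball.1 hy) hrk)
        rw [Real.dist_eq] at h1
        have h1' := abs_lt.1 h1
        have h2 : gr n y ≤ gr n x + η := by linarith [h1'.1, h1'.2]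
        calc f n y = ENNReal.ofReal (gr n y) := by simp [hfdef]
          _ ≤ ENNReal.ofReal (gr n x + η) := ENNReal.ofReal_le_ofReal h2
          _ ≤ ENNReal.ofReal (gr n x) + ENNReal.ofReal η := ENNReal.ofReal_add_le
          _ = f n x + εr := by simp only [hηof, hfdef]
      have hlo : ∀ y ∈ Metric.ball x (r k), f n x - εr ≤ f n y := by
        intro y hy
        have h1 : dist (gr n y) (gr n x) < η := hδ (lt_trans (Metric.mem_ball.1 hy) hrk)
        rw [Real.dist_eq] at h1
        have h1' := abs_lt.1 h1
        have h2 : gr n x ≤ gr n y + η := by linarith [h1'.1, h1'.2]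
        have h3 : f n x ≤ f n y + εr := by
          calc f n x = ENNReal.ofReal (gr n x) := by simp [hfdef]
            _ ≤ ENNReal.ofReal (gr n y + η) := ENNReal.ofReal_le_ofReal h2
            _ ≤ ENNReal.ofReal (gr n y) + ENNReal.ofReal η := ENNReal.ofReal_add_le
            _ = f n y + εr := by simp only [hηof, hfdef]
        exact tsub_le_iff_right.2 h3
      have hint_up : ∫⁻ y, (Metric.ball x (r k)).indicator (f n) y ∂μ
          ≤ (f n x + εr) * m (r k) := by
        have hmono : ∀ y, (Metric.ball x (r k)).indicator (f n) y
            ≤ (Metric.ball x (r k)).indicator (fun _ => f n x + εr) y := by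
          intro y
          by_cases hy : y ∈ Metric.ball x (r k)
          · rw [Set.indicator_of_mem hy, Set.indicator_of_mem hy]; exact hup y hy
          · rw [Set.indicator_of_notMem hy, Set.indicator_of_notMem hy]
        refine (lintegral_mono hmono).trans ?_
        rw [lintegral_indicator_const measurableSet_ball, hμball]
      have hint_lo : (f n x - εr) * m (r k)
          ≤ ∫⁻ y, (Metric.ball x (r k)).indicator (f n) y ∂μ := by
        have hmono : ∀ y, (Metric.ball x (r k)).indicator (fun _ => f n x - εr) y
            ≤ (Metric.ball x (r k)).indicator (f n) y := by
          intro y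
          by_cases hy : y ∈ Metric.ball x (r k)
          · rw [Set.indicator_of_mem hy, Set.indicator_of_mem hy]; exact hlo y hy
          · rw [Set.indicator_of_notMem hy, Set.indicator_of_notMem hy]
        refine le_trans ?_ (lintegral_mono hmono)
        rw [lintegral_indicator_const measurableSet_ball, hμball]
      constructor
      · have h4 : f n x - εr ≤ F k x := by
          simp only [hFdef]
          calc f n x - εr = (m (r k))⁻¹ * ((f n x - εr) * m (r k)) := by
                rw [mul_comm (f n x - εr), ← mul_assoc,
                  ENNReal.inv_mul_cancel (hmpos _ (hrpos k)) (hmfin _), one_mul]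
            _ ≤ _ := mul_le_mul_right hint_lo _
        exact le_trans (tsub_le_tsub_left (min_le_left ε 1) _) h4
      · have h4 : F k x ≤ f n x + εr := by
          simp only [hFdef]
          calc (m (r k))⁻¹ * ∫⁻ y, (Metric.ball x (r k)).indicator (f n) y ∂μ
              ≤ (m (r k))⁻¹ * ((f n x + εr) * m (r k)) := mul_le_mul_right hint_up _
            _ = f n x + εr := by
                rw [mul_comm (f n x + εr), ← mul_assoc,
                  ENNReal.inv_mul_cancel (hmpos _ (hrpos k)) (hmfin _), one_mul]
        exact h4.trans (add_le_add_right (min_le_left ε 1) _)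
    have hdct := tendsto_lintegral_of_dominated_convergence (μ := μ₂)
      (T.indicator (1 : M → ℝ≥0∞)) hFmeas
      (fun k => ae_of_all _ (hFboundT k)) (hbound_fin μ₂) (ae_of_all _ hlim)
    simp_rw [hFconst] at hdct
    exact tendsto_nhds_unique tendsto_const_nhds hdct
  refine Measure.ext_of_generateFrom_of_iUnion {s : Set M | IsClosed s}
    (fun n => Metric.closedBall a n)
    (BorelSpace.measurable_eq.trans borel_eq_generateFrom_isClosed)
    (fun s hs t ht _ => hs.inter ht) (Metric.iUnion_closedBall_nat a)
    (fun n => Metric.isClosed_closedBall)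
    (fun n => ((isCompact_closedBall a n).measure_lt_top).ne) ?_
  intro F hF
  have key : ∀ ρ : Measure M, ρ F = ⨆ n : ℕ, ρ (F ∩ Metric.closedBall a n) := by
    intro ρ
    rw [← Directed.measure_iUnion, ← Set.inter_iUnion, Metric.iUnion_closedBall_nat,
      Set.inter_univ]
    exact Monotone.directed_le fun i j hij =>
      Set.inter_subset_inter_right _ (Metric.closedBall_subset_closedBall (Nat.cast_le.2 hij))
  rw [key μ, key μ₂]
  exact iSup_congr fun n => hcompact _ ((isCompact_closedBall a n).inter_left hF)
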